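/- (First Identity) For every natural number n, the following identity of polynomials in ℚ[x] holds: (x−2)·x·(x+2)·(3x+2)·a_n'(x) = 2n(x−1)·a_{n+2}(x) + (n(x−6)(x−2) + 3x² − 2x + 4)·a_{n+1}(x) − (3x³ + 18x² − 20x + 24 + 4n(x²+4))·a_n(x) + 8(x−1)²·c_n(x) − 32(x−1)²·c_{n−1}(x), where a_n' denotes the formal derivative of a_n. -/

import Mathlib

open Polynomial

/-- `a k` is the polynomial `∑_{m=0}^{k} C(2k+2-m, k-m) xᵐ`. -/
noncomputable def a (k : ℕ) : ℚ[X] :=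
  ∑ m ∈ Finset.range (k + 1), C (((2 * k + 2 - m).choose (k - m) : ℚ)) * X ^ m

/-- The convolution polynomials `c_n = ∑_{k=0}^n a_k a_{n-k}`, indexed by `ℤ`
with the convention `c_n = 0` for `n < 0`. -/
noncomputable def c (n : ℤ) : ℚ[X] :=
  if 0 ≤ n then ∑ k ∈ Finset.range (n.toNat + 1), a k * a (n.toNat - k) else 0

namespace Stmt4


abbrev S := PowerSeries ℚ[X]
noncomputable abbrev Cst : ℚ[X] →+* S := PowerSeries.C (R := ℚ[X])
noncomputable abbrev T : S := PowerSeries.X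
noncomputable abbrev Y : S := Cst Polynomial.X

noncomputable def Ap : S := PowerSeries.mk fun n => a n
noncomputable def Dp : S := PowerSeries.mk fun n => derivative (a n)
noncomputable def Np : S := PowerSeries.mk fun n => (n : ℚ[X]) * a n
noncomputable def Cp : S := PowerSeries.mk fun n => Polynomial.C ((catalan n : ℚ))
noncomputable def Pp : S := PowerSeries.mk fun n => (n : ℚ[X]) * Polynomial.C ((catalan n : ℚ))

lemma coeff_a (k m : ℕ) :
    (a k).coeff m = if m ≤ k then (((2*k+2-m).choose (k-m) : ℕ) : ℚ) else 0 := by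
  rw [a, Polynomial.finset_sum_coeff]
  simp only [Polynomial.coeff_C_mul, Polynomial.coeff_X_pow, mul_ite, mul_one, mul_zero]
  rw [Finset.sum_ite_eq (Finset.range (k+1)) m]
  simp [Nat.lt_succ_iff]

lemma coeff_CXk (r : ℚ[X]) (F : S) (k n : ℕ) :
    (PowerSeries.coeff (R := ℚ[X]) n) (Cst r * T^k * F)
      = if k ≤ n then r * PowerSeries.coeff (R := ℚ[X]) (n-k) F else 0 := by
  rw [mul_assoc, PowerSeries.coeff_C_mul, PowerSeries.coeff_X_pow_mul', mul_ite, mul_zero]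

lemma coeff_CXk' (r : ℚ[X]) (k n : ℕ) :
    (PowerSeries.coeff (R := ℚ[X]) n) (Cst r * T^k)
      = if k = n then r else 0 := by
  rw [← mul_one (Cst r * T^k), coeff_CXk]
  simp only [PowerSeries.coeff_one]
  rcases Nat.lt_trichotomy k n with h|h|h
  · rw [if_pos h.le, if_neg (by omega : ¬ n - k = 0), mul_zero, if_neg h.ne]
  · simp [h]
  · rw [if_neg (by omega : ¬ k ≤ n), if_neg (by omega : ¬ k = n)]




/-- coefficient function of `a`. -/
noncomputable def f (k m : ℕ) : ℚ := if m ≤ k then (((2*k+2-m).choose (k-m) : ℕ) : ℚ) else 0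

lemma pas (N K : ℕ) : ((N+1).choose (K+1) : ℚ) = N.choose K + N.choose (K+1) := by
  exact_mod_cast Nat.choose_succ_succ' N K

lemma pascal6 (u s : ℕ) :
    ((u+2*s+7).choose (s+2) : ℚ) - (u+2*s+6).choose (s+1) - (u+2*s+6).choose (s+2)
      - 4*((u+2*s+5).choose (s+1)) + 4*((u+2*s+4).choose s) + 4*((u+2*s+4).choose (s+1)) = 0 := by
  have p1 := pas (u+2*s+6) (s+1)
  have p2 := pas (u+2*s+4) s
  push_cast at p1 p2 ⊢
  linear_combination p1 - 4 * p2

lemma fkey (n m : ℕ) :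
    f (n+2) (m+1) - f (n+2) (m+2) - f (n+1) m - 4 * f (n+1) (m+1)
      + 4 * f (n+1) (m+2) + 4 * f n m = 0 := by
  rcases Nat.lt_or_ge m n with h | h
  · -- generic Pascal case
    obtain ⟨s, rfl⟩ : ∃ s, n = m + s + 1 := ⟨n - m - 1, by omega⟩
    rw [f, if_pos (by omega), f, if_pos (by omega), f, if_pos (by omega),
      f, if_pos (by omega), f, if_pos (by omega), f, if_pos (by omega)]
    rw [show 2*(m+s+1+2)+2-(m+1) = m+2*s+7 by omega, show m+s+1+2-(m+1) = s+2 by omega,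
      show 2*(m+s+1+2)+2-(m+2) = m+2*s+6 by omega, show m+s+1+2-(m+2) = s+1 by omega,
      show 2*(m+s+1+1)+2-m = m+2*s+6 by omega, show m+s+1+1-m = s+2 by omega,
      show 2*(m+s+1+1)+2-(m+1) = m+2*s+5 by omega, show m+s+1+1-(m+1) = s+1 by omega,
      show 2*(m+s+1+1)+2-(m+2) = m+2*s+4 by omega, show m+s+1+1-(m+2) = s by omega,
      show 2*(m+s+1)+2-m = m+2*s+4 by omega, show m+s+1-m = s+1 by omega]
    linear_combination pascal6 m s
  rcases Nat.eq_or_lt_of_le h with rfl | h1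
  · -- m = n
    rw [f, if_pos (by omega), f, if_pos (by omega), f, if_pos (by omega),
      f, if_pos (by omega), f, if_neg (by omega), f, if_pos (by omega)]
    rw [show 2*(n+2)+2-(n+1) = n+5 by omega, show n+2-(n+1) = 1 by omega,
      show 2*(n+2)+2-(n+2) = n+4 by omega, show n+2-(n+2) = 0 by omega,
      show 2*(n+1)+2-n = n+4 by omega, show n+1-n = 1 by omega,
      show 2*(n+1)+2-(n+1) = n+3 by omega, show n+1-(n+1) = 0 by omega,
      show 2*n+2-n = n+2 by omega, show n-n = 0 by omega]
    simp [Nat.choose_one_right]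
    push_cast
    ring
  rcases Nat.eq_or_lt_of_le h1 with h2 | h2
  · -- m = n+1
    obtain rfl : m = n+1 := h2.symm
    rw [f, if_pos (by omega), f, if_neg (by omega), f, if_pos (by omega),
      f, if_neg (by omega), f, if_neg (by omega), f, if_neg (by omega)]
    rw [show 2*(n+2)+2-(n+1+1) = n+4 by omega, show n+2-(n+1+1) = 0 by omega,
      show 2*(n+1)+2-(n+1) = n+3 by omega, show n+1-(n+1) = 0 by omega]
    simp
  · -- m ≥ n+2
    rw [f, if_neg (by omega), f, if_neg (by omega), f, if_neg (by omega),
      f, if_neg (by omega), f, if_neg (by omega), f, if_neg (by omega)]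
    ring



lemma csre (N K : ℕ) (L : ℕ) (h : N - K = L) :
    (N.choose (K+1) : ℚ) * (K+1) = N.choose K * L := by
  subst h; exact_mod_cast Nat.choose_succ_right_eq N K

lemma catI (n : ℕ) :
    4*(((2*n+4).choose (n+1) : ℕ) : ℚ) - ((2*n+6).choose (n+2) : ℕ)
        = ((catalan (n+3) : ℕ) : ℚ) - 2*((catalan (n+2) : ℕ) : ℚ) ∧
    (((2*n+6).choose (n+2) : ℕ) : ℚ) - ((2*n+5).choose (n+1) : ℕ)
        - 4*(((2*n+4).choose (n+1) : ℕ) : ℚ) + 4*(((2*n+3).choose n : ℕ) : ℚ)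
        = -((catalan (n+2) : ℕ) : ℚ) := by
  have e1 := csre (2*n+3) n (n+3) (by omega)
  have e2 := csre (2*n+4) n (n+4) (by omega)
  have e3 := csre (2*n+4) (n+1) (n+3) (by omega)
  have e4 := csre (2*n+5) (n+1) (n+4) (by omega)
  have e5 := csre (2*n+6) (n+2) (n+4) (by omega)
  have p1 : ((2*n+4).choose (n+1) : ℚ) = (2*n+3).choose n + (2*n+3).choose (n+1) := by
    rw [show 2*n+4 = (2*n+3)+1 by omega]; exact pas _ _
  have p2 : ((2*n+5).choose (n+1) : ℚ) = (2*n+4).choose n + (2*n+4).choose (n+1) := by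
    rw [show 2*n+5 = (2*n+4)+1 by omega]; exact pas _ _
  have p3 : ((2*n+5).choose (n+2) : ℚ) = (2*n+4).choose (n+1) + (2*n+4).choose (n+2) := by
    rw [show 2*n+5 = (2*n+4)+1 by omega]; exact pas _ _
  have p4 : ((2*n+6).choose (n+2) : ℚ) = (2*n+5).choose (n+1) + (2*n+5).choose (n+2) := by
    rw [show 2*n+6 = (2*n+5)+1 by omega]; exact pas _ _
  have q1 : ((n:ℚ)+3) * (catalan (n+2) : ℕ) = ((2*n+4).choose (n+2) : ℕ) := by
    have := succ_mul_catalan_eq_centralBinom (n+2)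
    rw [Nat.centralBinom_eq_two_mul_choose, show 2*(n+2) = 2*n+4 by omega] at this
    exact_mod_cast this
  have q2 : ((n:ℚ)+4) * (catalan (n+3) : ℕ) = ((2*n+6).choose (n+3) : ℕ) := by
    have := succ_mul_catalan_eq_centralBinom (n+3)
    rw [Nat.centralBinom_eq_two_mul_choose, show 2*(n+3) = 2*n+6 by omega] at this
    exact_mod_cast this
  have hn1 : ((n:ℚ)+1) ≠ 0 := by positivity
  have hn2 : ((n:ℚ)+2) ≠ 0 := by positivity
  have hn3 : ((n:ℚ)+3) ≠ 0 := by positivity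
  have hn4 : ((n:ℚ)+4) ≠ 0 := by positivity
  push_cast at e1 e2 e3 e4 e5 p1 p2 p3 p4 q1 q2
  have hD : ((n:ℚ)+1)*((n:ℚ)+2)*((n:ℚ)+3)*((n:ℚ)+4) ≠ 0 := by positivity
  constructor
  · have key : ((n:ℚ)+1)*((n:ℚ)+2)*((n:ℚ)+3)*((n:ℚ)+4) *
        ((4*(((2*n+4).choose (n+1) : ℕ) : ℚ) - ((2*n+6).choose (n+2) : ℕ))
          - (((catalan (n+3) : ℕ) : ℚ) - 2*((catalan (n+2) : ℕ) : ℚ))) = 0 := by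
      linear_combination (2*((n:ℚ)+1)*((n:ℚ)+3)*((n:ℚ)+4)) * e2
        + (2*((n:ℚ)+1)*((n:ℚ)+4)) * e3
        + (-(((n:ℚ)+4)^2*((n:ℚ)+1))) * e4
        + (-(((n:ℚ)+1)*((n:ℚ)+2))) * e5
        + (-(2*((n:ℚ)+4)^2*((n:ℚ)+1)*((n:ℚ)+3))) * p2
        + (-(((n:ℚ)+4)^2*((n:ℚ)+1)*((n:ℚ)+2))) * p4
        + (2*((n:ℚ)+1)*((n:ℚ)+2)*((n:ℚ)+4)) * q1
        + (-(((n:ℚ)+1)*((n:ℚ)+2)*((n:ℚ)+3))) * q2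
    rcases mul_eq_zero.mp key with h | h
    · exact absurd h hD
    · linarith
  · have key : ((n:ℚ)+1)*((n:ℚ)+2)*((n:ℚ)+3)*((n:ℚ)+4) *
        (((((2*n+6).choose (n+2) : ℕ) : ℚ) - ((2*n+5).choose (n+1) : ℕ)
          - 4*(((2*n+4).choose (n+1) : ℕ) : ℚ) + 4*(((2*n+3).choose n : ℕ) : ℚ))
          - (-((catalan (n+2) : ℕ) : ℚ))) = 0 := by
      linear_combination (-(2*((n:ℚ)+1)*((n:ℚ)+3)*((n:ℚ)+4))) * e1
        + (-(((n:ℚ)+1)*((n:ℚ)+3)*((n:ℚ)+4))) * e2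
        + (((n:ℚ)+1)*((n:ℚ)+4)) * e3
        + (((n:ℚ)+1)*((n:ℚ)+3)*((n:ℚ)+4)) * e4
        + (-(2*((n:ℚ)+1)^2*((n:ℚ)+3)*((n:ℚ)+4))) * p1
        + (((n:ℚ)+1)*((n:ℚ)+3)*((n:ℚ)+4)^2) * p2
        + (((n:ℚ)+1)*((n:ℚ)+2)*((n:ℚ)+3)*((n:ℚ)+4)) * p4
        + (((n:ℚ)+1)*((n:ℚ)+2)*((n:ℚ)+4)) * q1
    rcases mul_eq_zero.mp key with h | h
    · exact absurd h hD
    · linarith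



lemma coeff_a' (k m : ℕ) : (a k).coeff m = f k m := by
  rw [f, a, Polynomial.finset_sum_coeff]
  simp only [Polynomial.coeff_C_mul, Polynomial.coeff_X_pow, mul_ite, mul_one, mul_zero]
  rw [Finset.sum_ite_eq (Finset.range (k+1)) m]
  simp [Nat.lt_succ_iff]

lemma core (n : ℕ) :
    a (n+2) * X^1 - a (n+2) - a (n+1) * X^2 - Polynomial.C (4:ℚ) * (a (n+1) * X^1)
      + Polynomial.C (4:ℚ) * a (n+1) + Polynomial.C (4:ℚ) * (a n * X^2)
      + Polynomial.C (((catalan (n+2):ℕ) : ℚ)) * X^1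
      + Polynomial.C (2*((catalan (n+2):ℕ) : ℚ))
      - Polynomial.C (((catalan (n+3):ℕ) : ℚ)) = 0 := by
  ext m
  simp only [Polynomial.coeff_sub, Polynomial.coeff_add, Polynomial.coeff_mul_X_pow',
    Polynomial.coeff_C_mul, Polynomial.coeff_C, Polynomial.coeff_zero, coeff_a']
  rcases m with _ | m
  · norm_num
    rw [f, if_pos (by omega), f, if_pos (by omega),
      show 2*(n+2)+2-0 = 2*n+6 by omega, show n+2-0 = n+2 by omega,
      show 2*(n+1)+2-0 = 2*n+4 by omega, show n+1-0 = n+1 by omega]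
    linear_combination (catI n).1
  rcases m with _ | m
  · norm_num
    rw [f, if_pos (by omega), f, if_pos (by omega), f, if_pos (by omega), f, if_pos (by omega),
      show 2*(n+2)+2-0 = 2*n+6 by omega, show n+2-0 = n+2 by omega,
      show 2*(n+2)+2-1 = 2*n+5 by omega, show n+2-1 = n+1 by omega,
      show 2*(n+1)+2-0 = 2*n+4 by omega, show n+1-0 = n+1 by omega,
      show 2*(n+1)+2-1 = 2*n+3 by omega, show n+1-1 = n by omega]
    linear_combination (catI n).2
  · norm_num [Nat.succ_sub_succ]
    linear_combination fkey n m




lemma a0 : a 0 = 1 := by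
  simp [a]

lemma a1 : a 1 = Polynomial.C 4 + Polynomial.X := by
  rw [a, Finset.sum_range_succ, Finset.sum_range_one]
  norm_num [Nat.choose]

lemma cadd (n : ℕ) (F G : S) :
    PowerSeries.coeff (R := ℚ[X]) n (F + G) = PowerSeries.coeff (R := ℚ[X]) n F + PowerSeries.coeff (R := ℚ[X]) n G :=
  map_add _ _ _

lemma csub (n : ℕ) (F G : S) :
    PowerSeries.coeff (R := ℚ[X]) n (F - G) = PowerSeries.coeff (R := ℚ[X]) n F - PowerSeries.coeff (R := ℚ[X]) n G :=
  map_sub _ _ _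

lemma cneg (n : ℕ) (F : S) :
    PowerSeries.coeff (R := ℚ[X]) n (-F) = -(PowerSeries.coeff (R := ℚ[X]) n F) :=
  map_neg _ _

lemma h1c :
    Cst (X - 1) * T^1 * Ap + Cst (-(X^2+4*X-4)) * T^2 * Ap + Cst (4*X^2) * T^3 * Ap
      = Cp - Cst (X+2) * T^1 * Cp - 1 + Cst (2*X) * T^1 := by
  refine PowerSeries.ext fun n => ?_
  simp only [cadd, csub, coeff_CXk, coeff_CXk', PowerSeries.coeff_one,
    Ap, Cp, PowerSeries.coeff_mk]
  rcases Nat.lt_or_ge n 3 with h | h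
  · interval_cases n
    · norm_num
    · norm_num [a0]; ring
    · norm_num [a0, a1, catalan_two]
      simp only [map_ofNat]
      ring
  · obtain ⟨m, rfl⟩ : ∃ m, n = m + 3 := ⟨n - 3, by omega⟩
    rw [if_pos (by omega : 1 ≤ m+3), if_pos (by omega : 2 ≤ m+3), if_pos (by omega : 3 ≤ m+3),
      if_pos (by omega : 1 ≤ m+3), if_neg (by omega : ¬ 1 = m+3), if_neg (by omega : ¬ m+3 = 0),
      show m+3-1 = m+2 by omega, show m+3-2 = m+1 by omega, show m+3-3 = m by omega]
    linear_combination (norm := (simp only [map_ofNat, map_mul]; ring1)) core m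



lemma h2c : Cst 1 * T^1 * (Cp * Cp) = Cp - 1 := by
  refine PowerSeries.ext fun n => ?_
  simp only [csub, coeff_CXk, PowerSeries.coeff_one]
  rcases n with _ | n
  · norm_num [Cp]
  · rw [if_pos (by omega : 1 ≤ n+1), show n+1-1 = n by omega,
      if_neg (by omega : ¬ n+1 = 0), PowerSeries.coeff_mul]
    simp only [Cp, PowerSeries.coeff_mk, ← Polynomial.C_mul, ← map_sum]
    have : ∑ p ∈ Finset.HasAntidiagonal.antidiagonal n, ((catalan p.1 : ℚ) * (catalan p.2 : ℚ))
        = ((catalan (n+1) : ℕ) : ℚ) := by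
      exact_mod_cast (catalan_succ' n).symm
    rw [this]
    ring

lemma catstep (n : ℕ) :
    ((n:ℚ)+2)*((catalan (n+1):ℕ):ℚ) = (4*(n:ℚ)+2)*((catalan n:ℕ):ℚ) := by
  have h1 := succ_mul_catalan_eq_centralBinom (n+1)
  have h2 := Nat.succ_mul_centralBinom_succ n
  have h0 := succ_mul_catalan_eq_centralBinom n
  have hne : ((n:ℚ)+1) ≠ 0 := by positivity
  apply mul_left_cancel₀ hne
  have h1q : ((n:ℚ)+2)*((catalan (n+1):ℕ):ℚ) = ((Nat.centralBinom (n+1) : ℕ) : ℚ) := by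
    exact_mod_cast h1
  have h2q : ((n:ℚ)+1)*((Nat.centralBinom (n+1) : ℕ) : ℚ)
      = 2*(2*(n:ℚ)+1)*((Nat.centralBinom n : ℕ) : ℚ) := by exact_mod_cast h2
  have h0q : ((n:ℚ)+1)*((catalan n:ℕ):ℚ) = ((Nat.centralBinom n : ℕ) : ℚ) := by
    exact_mod_cast h0
  linear_combination ((n:ℚ)+1)*h1q + h2q - (4*(n:ℚ)+2)*h0q
  
lemma h3c : Cst 4 * T^1 * Pp - Pp = Cp - Cst 2 * T^1 * Cp - 1 := by
  refine PowerSeries.ext fun n => ?_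
  simp only [csub, coeff_CXk, PowerSeries.coeff_one, Pp, Cp, PowerSeries.coeff_mk]
  rcases n with _ | n
  · norm_num
  · rw [if_pos (by omega : 1 ≤ n+1), show n+1-1 = n by omega,
      if_pos (by omega : 1 ≤ n+1), if_neg (by omega : ¬ n+1 = 0)]
    have hkey := congrArg (Polynomial.C : ℚ →+* ℚ[X]) (catstep n)
    simp only [map_mul, map_add, map_natCast, map_ofNat] at hkey
    linear_combination (norm := (push_cast [Polynomial.C_eq_natCast]; ring1)) (-1 : ℚ[X]) * hkey

lemma hDc :
    Cst (X - 1) * T^1 * Dp + Cst (-(X^2+4*X-4)) * T^2 * Dp + Cst (4*X^2) * T^3 * Dp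
      + Cst 1 * T^1 * Ap + Cst (-(2*X+4)) * T^2 * Ap + Cst (8*X) * T^3 * Ap
      = -(Cst 1 * T^1 * Cp) + Cst 2 * T^1 := by
  refine PowerSeries.ext fun n => ?_
  simp only [cadd, csub, cneg, coeff_CXk, coeff_CXk', PowerSeries.coeff_one,
    Ap, Cp, Dp, PowerSeries.coeff_mk]
  rcases Nat.lt_or_ge n 3 with h | h
  · interval_cases n
    · norm_num
    · norm_num [a0]
    · norm_num [a0, a1]
      simp only [map_ofNat]
      ring
  · obtain ⟨m, rfl⟩ : ∃ m, n = m + 3 := ⟨n - 3, by omega⟩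
    rw [if_pos (by omega : 1 ≤ m+3), if_pos (by omega : 2 ≤ m+3), if_pos (by omega : 3 ≤ m+3),
      if_pos (by omega : 1 ≤ m+3), if_pos (by omega : 2 ≤ m+3), if_pos (by omega : 3 ≤ m+3),
      if_pos (by omega : 1 ≤ m+3), if_neg (by omega : ¬ 1 = m+3),
      show m+3-1 = m+2 by omega, show m+3-2 = m+1 by omega, show m+3-3 = m by omega]
    have hcd := congrArg (derivative (R := ℚ)) (core m)
    simp only [derivative_sub, derivative_add, derivative_mul, Polynomial.derivative_C,
      Polynomial.derivative_X_pow, derivative_zero, Polynomial.derivative_X] at hcd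
    norm_num at hcd
    linear_combination (norm := (push_cast [Polynomial.C_eq_natCast, map_ofNat, map_mul]; ring1)) hcd

lemma hNc :
    Cst (X - 1) * T^1 * Np + Cst (-(X^2+4*X-4)) * T^2 * Np + Cst (4*X^2) * T^3 * Np
      + Cst (X - 1) * T^1 * Ap + Cst (-2*(X^2+4*X-4)) * T^2 * Ap + Cst (12*X^2) * T^3 * Ap
      = Pp - Cst (X+2) * T^1 * Pp - Cst (X+2) * T^1 * Cp + Cst (2*X) * T^1 := by
  refine PowerSeries.ext fun n => ?_
  simp only [cadd, csub, cneg, coeff_CXk, coeff_CXk', PowerSeries.coeff_one,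
    Ap, Cp, Np, Pp, PowerSeries.coeff_mk]
  rcases Nat.lt_or_ge n 3 with h | h
  · interval_cases n
    · norm_num
    · norm_num [a0]; ring
    · norm_num [a0, a1, catalan_two]
      simp only [map_ofNat]
      ring
  · obtain ⟨m, rfl⟩ : ∃ m, n = m + 3 := ⟨n - 3, by omega⟩
    rw [if_pos (by omega : 1 ≤ m+3), if_pos (by omega : 2 ≤ m+3), if_pos (by omega : 3 ≤ m+3),
      if_pos (by omega : 1 ≤ m+3), if_pos (by omega : 2 ≤ m+3), if_pos (by omega : 3 ≤ m+3),
      if_pos (by omega : 1 ≤ m+3), if_pos (by omega : 1 ≤ m+3), if_neg (by omega : ¬ 1 = m+3),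
      show m+3-1 = m+2 by omega, show m+3-2 = m+1 by omega, show m+3-3 = m by omega]
    linear_combination (norm := (push_cast [map_ofNat, map_mul]; ring1)) ((m:ℚ[X])+3) * core m




noncomputable abbrev Dl : S := (Y - 1) - (Y^2+4*Y-4)*T + 4*Y^2*T^2

lemma hY1 : T * Dl * Ap = (1 - (Y+2)*T) * Cp - (1 - 2*Y*T) := by
  have h := h1c
  simp only [map_sub, map_add, map_mul, map_pow, map_one, map_ofNat, map_neg] at h
  linear_combination h

lemma h2Y : T * (Cp * Cp) = Cp - 1 := by
  have h := h2c
  simp only [map_one] at h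
  linear_combination h

lemma h3Y : (4*T - 1) * Pp = (1 - 2*T)*Cp - 1 := by
  have h := h3c
  simp only [map_ofNat] at h
  linear_combination h

lemma hDY : T * Dl * Dp + T * (1 - (2*Y+4)*T + 8*Y*T^2) * Ap = -(T*Cp) + 2*T := by
  have h := hDc
  simp only [map_sub, map_add, map_mul, map_pow, map_one, map_ofNat, map_neg] at h
  linear_combination h

lemma hNY : ((Y-1)*T - 2*(Y^2+4*Y-4)*T^2 + 12*Y^2*T^3) * Ap + T * Dl * Np
    = Pp - (Y+2)*(T*Pp + T*Cp) + 2*Y*T := by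
  have h := hNc
  simp only [map_sub, map_add, map_mul, map_pow, map_one, map_ofNat, map_neg] at h
  linear_combination h

lemma hMne : (T * Dl)^4 * (4*T - 1) * T ≠ 0 := by
  have hT : (T : S) ≠ 0 := PowerSeries.X_ne_zero
  have hDl : (Dl : S) ≠ 0 := by
    intro h
    have := congrArg (PowerSeries.constantCoeff (R := ℚ[X])) h
    simp only [map_sub, map_add, map_mul, map_pow, map_one, map_ofNat,
      PowerSeries.constantCoeff_X, PowerSeries.constantCoeff_C, map_zero] at this
    simp only [mul_zero, zero_mul, sub_zero, add_zero, pow_two] at this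
    exact Polynomial.X_sub_C_ne_zero (1:ℚ) (by simpa using this)
  have h41 : ((4:S)*T - 1) ≠ 0 := by
    intro h
    have := congrArg (PowerSeries.constantCoeff (R := ℚ[X])) h
    simp at this
  exact mul_ne_zero (mul_ne_zero (pow_ne_zero _ (mul_ne_zero hT hDl)) h41) hT

set_option maxHeartbeats 4000000 in
lemma masterc :
    Cst ((X-2)*X*(X+2)*(3*X+2)) * T^2 * Dp
      = Cst (2*(X-1)) * Np - Cst (4*(X-1)) * Ap + Cst (4*(X-1)) * T^0
        + Cst (2*(X-1)*(X+4)) * T^1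
        + Cst ((X-6)*(X-2)) * T^1 * Np + Cst (3*X^2-2*X+4-(X-6)*(X-2)) * T^1 * Ap
        + Cst ((X-6)*(X-2)-(3*X^2-2*X+4)) * T^1
        - Cst (3*X^3+18*X^2-20*X+24) * T^2 * Ap - Cst (4*(X^2+4)) * T^2 * Np
        + Cst (8*(X-1)^2) * T^2 * (Ap*Ap) - Cst (32*(X-1)^2) * T^3 * (Ap*Ap) := by
  simp only [map_sub, map_add, map_mul, map_pow, map_one, map_ofNat, map_neg]
  apply mul_left_cancel₀ hMne
  linear_combination (- 6*T^4 + 24*T^4*Y - 36*T^4*Y^2 + 24*T^4*Y^3 - 6*T^4*Y^4 + 116*T^5 + 8*T^5*Cp - 458*T^5*Y - 32*T^5*Y*Cp + 657*T^5*Y^2 + 48*T^5*Y^2*Cp - 383*T^5*Y^3 - 32*T^5*Y^3*Cp + 47*T^5*Y^4 + 8*T^5*Y^4*Cp + 21*T^5*Y^5 - 904*T^6 - 8*T^6*Ap - 144*T^6*Cp + 3500*T^6*Y + 40*T^6*Y*Ap + 568*T^6*Y*Cp - 4686*T^6*Y^2 - 80*T^6*Y^2*Ap - 816*T^6*Y^2*Cp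 + 2105*T^6*Y^3 + 80*T^6*Y^3*Ap + 480*T^6*Y^3*Cp + 344*T^6*Y^4 - 40*T^6*Y^4*Ap - 64*T^6*Y^4*Cp - 335*T^6*Y^5 + 8*T^6*Y^5*Ap - 24*T^6*Y^5*Cp - 24*T^6*Y^6 + 3584*T^7 + 160*T^7*Ap + 1024*T^7*Cp - 13440*T^7*Y - 800*T^7*Y*Ap - 3968*T^7*Y*Cp + 15912*T^7*Y^2 + 1576*T^7*Y^2*Ap + 5344*T^7*Y^2*Cp - 3092*T^7*Y^3 - 1504*T^7*Y^3*Ap - 2480*T^7*Y^3*Cp - 5278*T^7*Y^4 + 656*T^7*Y^4*Ap - 296*T^7*Y^4*Cp + 1873*T^7*Y^5 - 64*T^7*Y^5*Ap + 352*T^7*Y^5*Cp + 435*T^7*Y^6 - 24*T^7*Y^6*Ap + 24*T^7*Y^6*Cp + 6*T^7*Y^7 - 7424*T^8 - 1280*T^8*Ap - 3584*T^8*Cp + 26240*T^8*Y + 6400*T^8*Y*Ap + 13568*T^8*Y*Cp - 23232*T^8*Y^2 - 12320*T^8*Y^2*Ap - 16384*T^8*Y^2*Cp - 12128*T^8*Y^3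 + 10880*T^8*Y^3*Ap + 3840*T^8*Y^3*Cp + 22984*T^8*Y^4 - 3544*T^8*Y^4*Ap + 4720*T^8*Y^4*Cp - 3228*T^8*Y^5 - 568*T^8*Y^5*Ap - 1768*T^8*Y^5*Cp - 3098*T^8*Y^6 + 408*T^8*Y^6*Ap - 384*T^8*Y^6*Cp - 125*T^8*Y^7 + 24*T^8*Y^7*Ap - 8*T^8*Y^7*Cp + 6*T^8*Y^8 + 7168*T^9 + 5120*T^9*Ap + 6144*T^9*Cp - 22016*T^9*Y - 25600*T^9*Y*Ap - 22528*T^9*Y*Cp + 1536*T^9*Y^2 + 47360*T^9*Y^2*Ap + 21504*T^9*Y^2*Cp + 49792*T^9*Y^3 - 35840*T^9*Y^3*Ap + 7680*T^9*Y^3*Cp - 40640*T^9*Y^4 + 3040*T^9*Y^4*Ap - 17920*T^9*Y^4*Cp - 7392*T^9*Y^5 + 8800*T^9*Y^5*Ap + 2688*T^9*Y^5*Cp + 10680*T^9*Y^6 - 2408*T^9*Y^6*Ap + 2304*T^9*Y^6*Cp + 1044*T^9*Y^7 - 464*T^9*Y^7*Ap + 128*T^9*Y^7*Cp - 94*T^9*Y^8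 - 8*T^9*Y^8*Ap - 3*T^9*Y^9 - 2048*T^10 - 10240*T^10*Ap - 4096*T^10*Cp + 3072*T^10*Y + 51200*T^10*Y*Ap + 14336*T^10*Y*Cp + 23040*T^10*Y^2 - 87040*T^10*Y^2*Ap - 4096*T^10*Y^2*Cp - 54016*T^10*Y^3 + 40960*T^10*Y^3*Ap - 28672*T^10*Y^3*Cp + 15616*T^10*Y^4 + 37120*T^10*Y^4*Ap + 25088*T^10*Y^4*Cp + 34688*T^10*Y^5 - 39680*T^10*Y^5*Ap + 4352*T^10*Y^5*Cp - 16960*T^10*Y^6 + 4000*T^10*Y^6*Ap - 6144*T^10*Y^6*Cp - 4384*T^10*Y^7 + 3520*T^10*Y^7*Ap - 768*T^10*Y^7*Cp + 544*T^10*Y^8 + 160*T^10*Y^8*Ap + 48*T^10*Y^9 + 8192*T^11*Ap - 40960*T^11*Y*Ap - 6144*T^11*Y^2 + 51200*T^11*Y^2*Ap - 8192*T^11*Y^2*Cp + 7168*T^11*Y^3 + 40960*T^11*Y^3*Ap + 20480*T^11*Y^3*Cp + 23040*T^11*Y^4 - 128000*T^11*Y^4*Ap - 6144*T^11*Y^4*Cp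 - 37632*T^11*Y^5 + 68608*T^11*Y^5*Ap - 14336*T^11*Y^5*Cp + 6656*T^11*Y^6 + 14080*T^11*Y^6*Ap + 6144*T^11*Y^6*Cp + 9344*T^11*Y^7 - 12800*T^11*Y^7*Ap + 2048*T^11*Y^7*Cp - 1344*T^11*Y^8 - 1280*T^11*Y^8*Ap - 288*T^11*Y^9 + 24576*T^12*Y^2*Ap - 98304*T^12*Y^3*Ap - 6144*T^12*Y^4 + 116736*T^12*Y^4*Ap - 4096*T^12*Y^4*Cp + 5120*T^12*Y^5 - 6144*T^12*Y^5*Ap + 6144*T^12*Y^5*Cp + 7680*T^12*Y^6 - 62464*T^12*Y^6*Ap - 8448*T^12*Y^7 + 20480*T^12*Y^7*Ap - 2048*T^12*Y^7*Cp + 1024*T^12*Y^8 + 5120*T^12*Y^8*Ap + 768*T^12*Y^9 + 24576*T^13*Y^4*Ap - 73728*T^13*Y^5*Ap - 2048*T^13*Y^6 + 63488*T^13*Y^6*Ap + 1024*T^13*Y^7 - 4096*T^13*Y^7*Ap + 512*T^13*Y^8 - 10240*T^13*Y^8*Ap - 768*T^13*Y^9 + 8192*T^14*Y^6*Ap - 16384*T^14*Y^7*Ap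 + 8192*T^14*Y^8*Ap) * hY1
  + (8*T^4 - 32*T^4*Y + 48*T^4*Y^2 - 32*T^4*Y^3 + 8*T^4*Y^4 - 160*T^5 + 624*T^5*Y - 880*T^5*Y^2 + 496*T^5*Y^3 - 48*T^5*Y^4 - 32*T^5*Y^5 + 1312*T^6 - 4960*T^6*Y + 6408*T^6*Y^2 - 2624*T^6*Y^3 - 648*T^6*Y^4 + 464*T^6*Y^5 + 48*T^6*Y^6 - 5632*T^7 + 20480*T^7*Y - 23104*T^7*Y^2 + 3456*T^7*Y^3 + 7792*T^7*Y^4 - 2176*T^7*Y^5 - 784*T^7*Y^6 - 32*T^7*Y^7 + 13312*T^8 - 46080*T^8*Y + 40704*T^8*Y^2 + 16384*T^8*Y^3 - 31200*T^8*Y^4 + 1504*T^8*Y^5 + 4840*T^8*Y^6 + 528*T^8*Y^7 + 8*T^8*Y^8 - 16384*T^9 + 53248*T^9*Y - 24576*T^9*Y^2 - 65536*T^9*Y^3 + 53248*T^9*Y^4 + 16896*T^9*Y^5 - 13440*T^9*Y^6 - 3328*T^9*Y^7 - 128*T^9*Y^8 + 8192*T^10 - 24576*T^10*Y - 14336*T^10*Y^2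 + 81920*T^10*Y^3 - 27648*T^10*Y^4 - 48128*T^10*Y^5 + 14080*T^10*Y^6 + 9728*T^10*Y^7 + 768*T^10*Y^8 + 16384*T^11*Y^2 - 32768*T^11*Y^3 - 12288*T^11*Y^4 + 40960*T^11*Y^5 + 2048*T^11*Y^6 - 12288*T^11*Y^7 - 2048*T^11*Y^8 + 8192*T^12*Y^4 - 8192*T^12*Y^5 - 6144*T^12*Y^6 + 4096*T^12*Y^7 + 2048*T^12*Y^8) * h2Y
  + (- 2*T^4 + 8*T^4*Y - 12*T^4*Y^2 + 8*T^4*Y^3 - 2*T^4*Y^4 + 40*T^5 - 154*T^5*Y + 215*T^5*Y^2 - 121*T^5*Y^3 + 13*T^5*Y^4 + 7*T^5*Y^5 - 328*T^6 + 1204*T^6*Y - 1510*T^6*Y^2 + 603*T^6*Y^3 + 140*T^6*Y^4 - 101*T^6*Y^5 - 8*T^6*Y^6 + 1408*T^7 - 4864*T^7*Y + 5096*T^7*Y^2 - 492*T^7*Y^3 - 1742*T^7*Y^4 + 463*T^7*Y^5 + 129*T^7*Y^6 + 2*T^7*Y^7 - 3328*T^8 + 10624*T^8*Y - 7616*T^8*Y^2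 - 5408*T^8*Y^3 + 6728*T^8*Y^4 - 196*T^8*Y^5 - 770*T^8*Y^6 - 31*T^8*Y^7 + 2*T^8*Y^8 + 4096*T^9 - 11776*T^9*Y + 1024*T^9*Y^2 + 18816*T^9*Y^3 - 9920*T^9*Y^4 - 4384*T^9*Y^5 + 1912*T^9*Y^6 + 172*T^9*Y^7 - 34*T^9*Y^8 - T^9*Y^9 - 2048*T^10 + 5120*T^10*Y + 8704*T^10*Y^2 - 22784*T^10*Y^3 + 256*T^10*Y^4 + 12416*T^10*Y^5 - 832*T^10*Y^6 - 352*T^10*Y^7 + 224*T^10*Y^8 + 16*T^10*Y^9 - 6144*T^11*Y^2 + 9216*T^11*Y^3 + 10752*T^11*Y^4 - 11520*T^11*Y^5 - 4096*T^11*Y^6 - 128*T^11*Y^7 - 704*T^11*Y^8 - 96*T^11*Y^9 - 6144*T^12*Y^4 + 3072*T^12*Y^5 + 5632*T^12*Y^6 + 1280*T^12*Y^7 + 1024*T^12*Y^8 + 256*T^12*Y^9 - 2048*T^13*Y^6 - 1024*T^13*Y^7 - 512*T^13*Y^8 - 256*T^13*Y^9) * h3Y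
  + (- 8*T^6*Y + 12*T^6*Y^2 + 14*T^6*Y^3 - 31*T^6*Y^4 + 9*T^6*Y^5 + 7*T^6*Y^6 - 3*T^6*Y^7 + 128*T^7*Y - 192*T^7*Y^2 - 248*T^7*Y^3 + 508*T^7*Y^4 - 90*T^7*Y^5 - 151*T^7*Y^6 + 36*T^7*Y^7 + 9*T^7*Y^8 - 768*T^8*Y + 1152*T^8*Y^2 + 1728*T^8*Y^3 - 3168*T^8*Y^4 - 24*T^8*Y^5 + 1284*T^8*Y^6 - 54*T^8*Y^7 - 141*T^8*Y^8 - 9*T^8*Y^9 + 2048*T^9*Y - 3072*T^9*Y^2 - 5888*T^9*Y^3 + 9088*T^9*Y^4 + 3264*T^9*Y^5 - 5344*T^9*Y^6 - 1064*T^9*Y^7 + 804*T^9*Y^8 + 146*T^9*Y^9 + 3*T^9*Y^10 - 2048*T^10*Y + 3072*T^10*Y^2 + 9728*T^10*Y^3 - 11008*T^10*Y^4 - 13824*T^10*Y^5 + 10624*T^10*Y^6 + 6464*T^10*Y^7 - 1824*T^10*Y^8 - 896*T^10*Y^9 - 48*T^10*Y^10 - 6144*T^11*Y^3 + 3072*T^11*Y^4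 + 19968*T^11*Y^5 - 6912*T^11*Y^6 - 14592*T^11*Y^7 + 384*T^11*Y^8 + 2496*T^11*Y^9 + 288*T^11*Y^10 - 6144*T^12*Y^5 - 3072*T^12*Y^6 + 12800*T^12*Y^7 + 3840*T^12*Y^8 - 2816*T^12*Y^9 - 768*T^12*Y^10 - 2048*T^13*Y^7 - 3072*T^13*Y^8 + 512*T^13*Y^9 + 768*T^13*Y^10) * hDY
  + (2*T^4 - 8*T^4*Y + 12*T^4*Y^2 - 8*T^4*Y^3 + 2*T^4*Y^4 - 44*T^5 + 172*T^5*Y - 247*T^5*Y^2 + 149*T^5*Y^3 - 25*T^5*Y^4 - 5*T^5*Y^5 + 400*T^6 - 1520*T^6*Y + 2048*T^6*Y^2 - 1036*T^6*Y^3 + 11*T^6*Y^4 + 94*T^6*Y^5 + 3*T^6*Y^6 - 1920*T^7 + 7040*T^7*Y - 8560*T^7*Y^2 + 2880*T^7*Y^3 + 1288*T^7*Y^4 - 668*T^7*Y^5 - 61*T^7*Y^6 + T^7*Y^7 + 5120*T^8 - 17920*T^8*Y + 17920*T^8*Y^2 + 640*T^8*Y^3 - 8240*T^8*Y^4 + 2000*T^8*Y^5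 + 496*T^8*Y^6 - 20*T^8*Y^7 - T^8*Y^8 - 7168*T^9 + 23552*T^9*Y - 13568*T^9*Y^2 - 21248*T^9*Y^3 + 20992*T^9*Y^4 - 640*T^9*Y^5 - 2000*T^9*Y^6 + 160*T^9*Y^7 + 20*T^9*Y^8 + 4096*T^10 - 12288*T^10*Y - 8192*T^10*Y^2 + 41984*T^10*Y^3 - 19200*T^10*Y^4 - 10240*T^10*Y^5 + 3840*T^10*Y^6 - 640*T^10*Y^7 - 160*T^10*Y^8 + 12288*T^11*Y^2 - 24576*T^11*Y^3 - 6144*T^11*Y^4 + 21504*T^11*Y^5 - 1792*T^11*Y^6 + 1280*T^11*Y^7 + 640*T^11*Y^8 + 12288*T^12*Y^4 - 12288*T^12*Y^5 - 4096*T^12*Y^6 - 1024*T^12*Y^7 - 1280*T^12*Y^8 + 4096*T^13*Y^6 + 1024*T^13*Y^8) * hNY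



lemma cAp (n : ℕ) : PowerSeries.coeff (R := ℚ[X]) n (Ap * Ap) = c (n : ℤ) := by
  rw [PowerSeries.coeff_mul, c, if_pos (Int.natCast_nonneg n), Int.toNat_natCast]
  simp only [Ap, PowerSeries.coeff_mk]
  exact Finset.Nat.sum_antidiagonal_eq_sum_range_succ_mk _ _

lemma cKm (n : ℕ) :
    (if 3 ≤ n+2 then (32*(X-1)^2 : ℚ[X]) * PowerSeries.coeff (R := ℚ[X]) (n+2-3) (Ap*Ap) else 0)
      = 32*(X-1)^2 * c ((n:ℤ)-1) := by
  rcases n with _ | n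
  · rw [if_neg (by omega), c, if_neg (by omega), mul_zero]
  · rw [if_pos (by omega), show n+1+2-3 = n by omega, cAp n,
      show ((n+1:ℕ):ℤ) - 1 = (n:ℤ) by push_cast; ring]




end Stmt4

open Stmt4 in
theorem stmt_4 (n : ℕ) :
    (X - 2) * X * (X + 2) * (3 * X + 2) * derivative (a n) =
      2 * (n : ℚ[X]) * (X - 1) * a (n + 2)
      + ((n : ℚ[X]) * (X - 6) * (X - 2) + 3 * X ^ 2 - 2 * X + 4) * a (n + 1)
      - (3 * X ^ 3 + 18 * X ^ 2 - 20 * X + 24 + 4 * (n : ℚ[X]) * (X ^ 2 + 4)) * a n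
      + 8 * (X - 1) ^ 2 * c (n : ℤ)
      - 32 * (X - 1) ^ 2 * c ((n : ℤ) - 1) := by
  have E := congrArg (PowerSeries.coeff (R := ℚ[X]) (n+2)) masterc
  simp only [cadd, csub, coeff_CXk, coeff_CXk', PowerSeries.coeff_C_mul,
    PowerSeries.coeff_X_pow, mul_ite, mul_one, mul_zero] at E
  rw [cKm n] at E
  have h1 : (1:ℕ) ≤ n+2 := by omega
  have h2 : (2:ℕ) ≤ n+2 := by omega
  simp only [if_pos h1, if_pos h2,
    if_neg (by omega : ¬ n+2 = 0), if_neg (by omega : ¬ n+2 = 1)] at E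
  rw [show n+2-1 = n+1 by omega, show n+2-2 = n by omega] at E
  rw [cAp n] at E
  simp only [Ap, Dp, Np, PowerSeries.coeff_mk] at E
  push_cast at E
  linear_combination E
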